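/- Let n ≥ 1, α = (α_1, …, α_{n+1}) ∈ ℝ^{n+1} with α_1 ≥ … ≥ α_{n+1}, β = (β_1, …, β_n) ∈ ℝ^n with β_1 ≥ … ≥ β_n, and suppose t ∈ ℝ satisfies the interlacing condition. Set s̄_− = max{ α_k + β_l : 1 ≤ k ≤ n+1, 1 ≤ l ≤ n, k + l ≥ n + 2 } and s̲_+ = min{ α_k + β_l : 1 ≤ k ≤ n+1, 1 ≤ l ≤ n, k + l ≤ n + 1 }. Then for every pair (k, l) with k + l ≤ n + 1 one has 1 + |t + α_k + β_l| ≤ 1 + (α_k + β_l − s̄_−), and for every pair (k, l) with k + l ≥ n + 2 one has 1 + |t + α_k + β_l| ≤ 1 + (s̲_+ − α_k − β_l); consequently Π_{l=1}^{n} Π_{k=1}^{n+1} (1 + |t + α_k + β_l|)^{−1/2} ≥ Π_{k+l ≤ n+1} (1 + α_k + β_l − s̄_−)^{−1/2} · Π_{k+l ≥ n+2} (1 + s̲_+ − α_k − β_l)^{−1/2}. -/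
import Mathlib


open Finset

lemma anti_of_step (m : ℕ) (f : ℕ → ℝ) (hf : ∀ k, 1 ≤ k → k ≤ m → f (k + 1) ≤ f k) :
    ∀ a b, 1 ≤ a → a ≤ b → b ≤ m + 1 → f b ≤ f a := by
  intro a b ha hab hb
  induction b with
  | zero => omega
  | succ c ih =>
    rcases Nat.eq_or_lt_of_le hab with h | h
    · rw [h]
    · have hc : a ≤ c := by omega
      calc f (c + 1) ≤ f c := hf c (by omega) (by omega)
        _ ≤ f a := ih hc (by omega)

/-- Let `n ≥ 1`, `α_1 ≥ … ≥ α_{n+1}`, `β_1 ≥ … ≥ β_n`, and suppose `t` satisfies the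
interlacing condition `−α_{n+2−j} ≥ β_j + t ≥ −α_{n+1−j}` for `1 ≤ j ≤ n`.  Let
`s̄₋` be the maximum of `α_k + β_l` over pairs with `k + l ≥ n + 2`, and `s̲₊` the
minimum of `α_k + β_l` over pairs with `k + l ≤ n + 1`.  Then for each pair `(k, l)`
with `k + l ≤ n + 1` one has `1 + |t + α_k + β_l| ≤ 1 + (α_k + β_l − s̄₋)`, for each
pair with `k + l ≥ n + 2` one has `1 + |t + α_k + β_l| ≤ 1 + (s̲₊ − α_k − β_l)`, and
consequently `Π_{l=1}^{n} Π_{k=1}^{n+1} (1 + |t + α_k + β_l|)^{−1/2}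
  ≥ Π_{k+l ≤ n+1} (1 + α_k + β_l − s̄₋)^{−1/2} · Π_{k+l ≥ n+2} (1 + s̲₊ − α_k − β_l)^{−1/2}`. -/
theorem statement18 (n : ℕ) (hn : 1 ≤ n) (α β : ℕ → ℝ)
    (hα : ∀ k, 1 ≤ k → k ≤ n → α (k + 1) ≤ α k)
    (hβ : ∀ k, 1 ≤ k → k + 1 ≤ n → β (k + 1) ≤ β k)
    (t : ℝ)
    (ht : ∀ j, 1 ≤ j → j ≤ n →
      β j + t ≤ -α (n + 2 - j) ∧ -α (n + 1 - j) ≤ β j + t)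
    (sbar splus : ℝ)
    (hsbar : IsGreatest
      { a | ∃ k l : ℕ, 1 ≤ k ∧ k ≤ n + 1 ∧ 1 ≤ l ∧ l ≤ n ∧ n + 2 ≤ k + l ∧
        a = α k + β l } sbar)
    (hsplus : IsLeast
      { a | ∃ k l : ℕ, 1 ≤ k ∧ k ≤ n + 1 ∧ 1 ≤ l ∧ l ≤ n ∧ k + l ≤ n + 1 ∧
        a = α k + β l } splus) :
    (∀ k l : ℕ, 1 ≤ k → k ≤ n + 1 → 1 ≤ l → l ≤ n → k + l ≤ n + 1 →
        1 + |t + α k + β l| ≤ 1 + (α k + β l - sbar)) ∧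
    (∀ k l : ℕ, 1 ≤ k → k ≤ n + 1 → 1 ≤ l → l ≤ n → n + 2 ≤ k + l →
        1 + |t + α k + β l| ≤ 1 + (splus - α k - β l)) ∧
    (∏ p ∈ (Icc 1 (n + 1) ×ˢ Icc 1 n).filter (fun p => p.1 + p.2 ≤ n + 1),
        (1 + α p.1 + β p.2 - sbar) ^ (-(1 : ℝ) / 2)) *
      (∏ p ∈ (Icc 1 (n + 1) ×ˢ Icc 1 n).filter (fun p => n + 2 ≤ p.1 + p.2),
        (1 + splus - α p.1 - β p.2) ^ (-(1 : ℝ) / 2)) ≤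
      ∏ l ∈ Icc 1 n, ∏ k ∈ Icc 1 (n + 1), (1 + |t + α k + β l|) ^ (-(1 : ℝ) / 2) := by
  have hαmono : ∀ a b, 1 ≤ a → a ≤ b → b ≤ n + 1 → α b ≤ α a := anti_of_step n α hα
  -- nonnegativity for k + l ≤ n + 1
  have h1 : ∀ k l : ℕ, 1 ≤ k → k ≤ n + 1 → 1 ≤ l → l ≤ n → k + l ≤ n + 1 →
      0 ≤ t + α k + β l := by
    intro k l hk hk' hl hl' hkl
    have h := (ht l hl hl').2
    have hmono : α (n + 1 - l) ≤ α k := hαmono k (n + 1 - l) hk (by omega) (by omega)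
    linarith
  -- nonpositivity for k + l ≥ n + 2
  have h2 : ∀ k l : ℕ, 1 ≤ k → k ≤ n + 1 → 1 ≤ l → l ≤ n → n + 2 ≤ k + l →
      t + α k + β l ≤ 0 := by
    intro k l hk hk' hl hl' hkl
    have h := (ht l hl hl').1
    have hmono : α k ≤ α (n + 2 - l) := hαmono (n + 2 - l) k (by omega) (by omega) hk'
    linarith
  have hts : t + sbar ≤ 0 := by
    obtain ⟨k, l, hk, hk', hl, hl', hkl, hs⟩ := hsbar.1
    have := h2 k l hk hk' hl hl' hkl
    linarith
  have hts' : 0 ≤ t + splus := by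
    obtain ⟨k, l, hk, hk', hl, hl', hkl, hs⟩ := hsplus.1
    have := h1 k l hk hk' hl hl' hkl
    linarith
  have hA : ∀ k l : ℕ, 1 ≤ k → k ≤ n + 1 → 1 ≤ l → l ≤ n → k + l ≤ n + 1 →
      1 + |t + α k + β l| ≤ 1 + (α k + β l - sbar) := by
    intro k l hk hk' hl hl' hkl
    have h0 := h1 k l hk hk' hl hl' hkl
    rw [abs_of_nonneg h0]
    linarith
  have hB : ∀ k l : ℕ, 1 ≤ k → k ≤ n + 1 → 1 ≤ l → l ≤ n → n + 2 ≤ k + l →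
      1 + |t + α k + β l| ≤ 1 + (splus - α k - β l) := by
    intro k l hk hk' hl hl' hkl
    have h0 := h2 k l hk hk' hl hl' hkl
    rw [abs_of_nonpos h0]
    linarith
  refine ⟨hA, hB, ?_⟩
  have hrhs : ∏ l ∈ Icc 1 n, ∏ k ∈ Icc 1 (n + 1), (1 + |t + α k + β l|) ^ (-(1 : ℝ) / 2)
      = ∏ p ∈ Icc 1 (n + 1) ×ˢ Icc 1 n, (1 + |t + α p.1 + β p.2|) ^ (-(1 : ℝ) / 2) := by
    rw [Finset.prod_product]
    exact Finset.prod_comm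
  rw [hrhs, ← Finset.prod_filter_mul_prod_filter_not (Icc 1 (n + 1) ×ˢ Icc 1 n)
    (fun p => p.1 + p.2 ≤ n + 1)]
  have hfil : (Icc 1 (n + 1) ×ˢ Icc 1 n).filter (fun p => ¬ p.1 + p.2 ≤ n + 1)
      = (Icc 1 (n + 1) ×ˢ Icc 1 n).filter (fun p => n + 2 ≤ p.1 + p.2) := by
    apply Finset.filter_congr
    intro p _
    simp only [not_le, eq_iff_iff]
    omega
  rw [hfil]
  have hmem : ∀ p ∈ Icc 1 (n + 1) ×ˢ Icc 1 n,
      1 ≤ p.1 ∧ p.1 ≤ n + 1 ∧ 1 ≤ p.2 ∧ p.2 ≤ n := by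
    intro p hp
    rw [Finset.mem_product, Finset.mem_Icc, Finset.mem_Icc] at hp
    exact ⟨hp.1.1, hp.1.2, hp.2.1, hp.2.2⟩
  have hposA : ∀ p ∈ (Icc 1 (n + 1) ×ˢ Icc 1 n).filter (fun p => p.1 + p.2 ≤ n + 1),
      (0:ℝ) ≤ (1 + α p.1 + β p.2 - sbar) ^ (-(1:ℝ) / 2) := by
    intro p hp
    rw [Finset.mem_filter] at hp
    obtain ⟨h1', h2', h3', h4'⟩ := hmem p hp.1
    have hle := hA p.1 p.2 h1' h2' h3' h4' hp.2
    have hpos : (0:ℝ) < 1 + |t + α p.1 + β p.2| := by positivity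
    exact Real.rpow_nonneg (by linarith) _
  have key1 : ∏ p ∈ (Icc 1 (n + 1) ×ˢ Icc 1 n).filter (fun p => p.1 + p.2 ≤ n + 1),
      (1 + α p.1 + β p.2 - sbar) ^ (-(1:ℝ) / 2)
      ≤ ∏ p ∈ (Icc 1 (n + 1) ×ˢ Icc 1 n).filter (fun p => p.1 + p.2 ≤ n + 1),
      (1 + |t + α p.1 + β p.2|) ^ (-(1:ℝ) / 2) := by
    apply Finset.prod_le_prod hposA
    intro p hp
    rw [Finset.mem_filter] at hp
    obtain ⟨h1', h2', h3', h4'⟩ := hmem p hp.1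
    have hle := hA p.1 p.2 h1' h2' h3' h4' hp.2
    have hpos : (0:ℝ) < 1 + |t + α p.1 + β p.2| := by positivity
    exact Real.rpow_le_rpow_of_nonpos hpos (by linarith) (by norm_num)
  have key2 : ∏ p ∈ (Icc 1 (n + 1) ×ˢ Icc 1 n).filter (fun p => n + 2 ≤ p.1 + p.2),
      (1 + splus - α p.1 - β p.2) ^ (-(1:ℝ) / 2)
      ≤ ∏ p ∈ (Icc 1 (n + 1) ×ˢ Icc 1 n).filter (fun p => n + 2 ≤ p.1 + p.2),
      (1 + |t + α p.1 + β p.2|) ^ (-(1:ℝ) / 2) := by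
    apply Finset.prod_le_prod
    · intro p hp
      rw [Finset.mem_filter] at hp
      obtain ⟨h1', h2', h3', h4'⟩ := hmem p hp.1
      have hle := hB p.1 p.2 h1' h2' h3' h4' hp.2
      have hpos : (0:ℝ) < 1 + |t + α p.1 + β p.2| := by positivity
      exact Real.rpow_nonneg (by linarith) _
    · intro p hp
      rw [Finset.mem_filter] at hp
      obtain ⟨h1', h2', h3', h4'⟩ := hmem p hp.1
      have hle := hB p.1 p.2 h1' h2' h3' h4' hp.2
      have hpos : (0:ℝ) < 1 + |t + α p.1 + β p.2| := by positivity
      exact Real.rpow_le_rpow_of_nonpos hpos (by linarith) (by norm_num)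
  apply mul_le_mul key1 key2
  · apply Finset.prod_nonneg
    intro p hp
    rw [Finset.mem_filter] at hp
    obtain ⟨h1', h2', h3', h4'⟩ := hmem p hp.1
    have hle := hB p.1 p.2 h1' h2' h3' h4' hp.2
    have hpos : (0:ℝ) < 1 + |t + α p.1 + β p.2| := by positivity
    exact Real.rpow_nonneg (by linarith) _
  · apply Finset.prod_nonneg
    intro p _
    positivity
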